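/- Let C, D be n×n positive definite matrices. If the eigenvalue vector of D is weakly majorized by that of C, then the eigenvalue vector of C^{1/2} D C^{1/2} is weakly majorized by that of C². -/

import Mathlib

open Matrix ComplexOrder

namespace Matrix.PosSemidef

variable {𝕜 : Type*} [RCLike 𝕜] {m : Type*} [Fintype m] [DecidableEq m] {A : Matrix m m 𝕜}

/-- The positive semidefinite square root of a positive semidefinite matrix
(the definition Mathlib had in December 2024, since removed). -/
noncomputable def sqrt (hA : PosSemidef A) : Matrix m m 𝕜 :=
  hA.1.eigenvectorUnitary.1 * diagonal ((↑) ∘ (√·) ∘ hA.1.eigenvalues) *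
  (star hA.1.eigenvectorUnitary : Matrix m m 𝕜)

lemma posSemidef_sqrt (hA : PosSemidef A) : PosSemidef hA.sqrt := by
  apply PosSemidef.mul_mul_conjTranspose_same
  refine posSemidef_diagonal_iff.mpr fun i ↦ ?_
  rw [Function.comp_apply, RCLike.nonneg_iff]
  constructor
  · simp only [RCLike.ofReal_re]
    exact Real.sqrt_nonneg _
  · simp only [RCLike.ofReal_im]

end Matrix.PosSemidef

namespace Heron

variable {n : ℕ}

def WeakMaj {n : ℕ} (x y : Fin n → ℝ) : Prop :=
  ∀ s : Finset (Fin n), ∃ t : Finset (Fin n),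
    t.card = s.card ∧ ∑ i ∈ s, x i ≤ ∑ i ∈ t, y i

def Maj {n : ℕ} (x y : Fin n → ℝ) : Prop :=
  WeakMaj x y ∧ ∑ i, x i = ∑ i, y i

lemma sandwich_posSemidef {S T : Matrix (Fin n) (Fin n) ℂ} (hS : S.IsHermitian)
    (hT : T.PosSemidef) : (S * T * S).PosSemidef := by
  have h := hT.mul_mul_conjTranspose_same S
  rwa [hS.eq] at h

noncomputable def geomMean {A B : Matrix (Fin n) (Fin n) ℂ}
    (hA : A.PosDef) (hB : B.PosDef) : Matrix (Fin n) (Fin n) ℂ :=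
  hA.posSemidef.sqrt *
    (sandwich_posSemidef hA.posSemidef.posSemidef_sqrt.isHermitian.inv
        hB.posSemidef).sqrt *
    hA.posSemidef.sqrt

lemma geomMean_posSemidef {A B : Matrix (Fin n) (Fin n) ℂ}
    (hA : A.PosDef) (hB : B.PosDef) : (geomMean hA hB).PosSemidef :=
  sandwich_posSemidef hA.posSemidef.posSemidef_sqrt.isHermitian
    (Matrix.PosSemidef.posSemidef_sqrt _)

noncomputable def specMean {A B : Matrix (Fin n) (Fin n) ℂ}
    (hA : A.PosDef) (hB : B.PosDef) : Matrix (Fin n) (Fin n) ℂ :=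
  (geomMean_posSemidef hA.inv hB).sqrt * A * (geomMean_posSemidef hA.inv hB).sqrt

def HasPosSpectrum (M : Matrix (Fin n) (Fin n) ℂ) : Prop :=
  ∀ z ∈ spectrum ℂ M, 0 < z.re ∧ z.im = 0

def IsPrincipalSqrt (M S : Matrix (Fin n) (Fin n) ℂ) : Prop :=
  S * S = M ∧ HasPosSpectrum S

noncomputable def absMat (Y : Matrix (Fin n) (Fin n) ℂ) : Matrix (Fin n) (Fin n) ℂ :=
  (Matrix.posSemidef_conjTranspose_mul_self Y).sqrt

noncomputable def posPart (H : Matrix (Fin n) (Fin n) ℂ) : Matrix (Fin n) (Fin n) ℂ :=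
  ((1 : ℂ) / 2) • (absMat H + H)

end Heron

namespace Matrix.PosSemidef

lemma sqrt_mul_self {𝕜 : Type*} [RCLike 𝕜] {m : Type*} [Fintype m] [DecidableEq m]
    {A : Matrix m m 𝕜} (hA : PosSemidef A) : hA.sqrt * hA.sqrt = A := by
  have hsUU : star (hA.1.eigenvectorUnitary.1) * hA.1.eigenvectorUnitary.1 = 1 :=
    Matrix.UnitaryGroup.star_mul_self _
  have hdiag : diagonal (((↑) ∘ (√·) ∘ hA.1.eigenvalues) : m → 𝕜) *
      diagonal (((↑) ∘ (√·) ∘ hA.1.eigenvalues) : m → 𝕜) =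
      diagonal (RCLike.ofReal ∘ hA.1.eigenvalues : m → 𝕜) := by
    rw [diagonal_mul_diagonal]
    congr 1
    funext i
    simp only [Function.comp_apply]
    rw [← RCLike.ofReal_mul, Real.mul_self_sqrt (hA.eigenvalues_nonneg i)]
  conv_rhs => rw [hA.1.spectral_theorem, Unitary.conjStarAlgAut_apply]
  rw [sqrt]
  simp only [← mul_assoc]
  rw [mul_assoc (_ * _) _ hA.1.eigenvectorUnitary.1, hsUU, mul_one,
    mul_assoc hA.1.eigenvectorUnitary.1, hdiag]

end Matrix.PosSemidef

namespace Heron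



/-- max of sums over subsets of cardinality at most `k` -/
noncomputable def topSum {n : ℕ} (v : Fin n → ℝ) (k : ℕ) : ℝ :=
  (Finset.univ.powerset.filter fun t : Finset (Fin n) => t.card ≤ k).sup'
    ⟨∅, by simp⟩ (fun t => ∑ i ∈ t, v i)

lemma le_topSum {v : Fin n → ℝ} {k : ℕ} {J : Finset (Fin n)} (hJ : J.card ≤ k) :
    ∑ i ∈ J, v i ≤ topSum v k := by
  apply Finset.le_sup' (f := fun t => ∑ i ∈ t, v i)
  simp [hJ]

lemma topSum_nonneg (v : Fin n → ℝ) (k : ℕ) : 0 ≤ topSum v k := by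
  simpa using le_topSum (v := v) (k := k) (J := ∅) (by simp)

lemma topSum_mono (v : Fin n → ℝ) {k l : ℕ} (h : k ≤ l) : topSum v k ≤ topSum v l := by
  apply Finset.sup'_le
  intro t ht
  simp only [Finset.mem_filter] at ht
  exact le_topSum (ht.2.trans h)

/-- an attaining set of full cardinality, with the exchange property -/
lemma topSum_attained {v : Fin n → ℝ} (hv : ∀ i, 0 ≤ v i) {k : ℕ} (hk : k ≤ n) :
    ∃ T : Finset (Fin n), T.card = k ∧ ∑ i ∈ T, v i = topSum v k ∧
      ∀ i ∉ T, ∀ j ∈ T, v i ≤ v j := by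
  obtain ⟨T₀, hT₀mem, hT₀⟩ := Finset.exists_mem_eq_sup'
    (⟨∅, by simp⟩ : ((Finset.univ.powerset.filter fun t : Finset (Fin n) => t.card ≤ k)).Nonempty)
    (fun t => ∑ i ∈ t, v i)
  simp only [Finset.mem_filter] at hT₀mem
  obtain ⟨T, hsub, hcard⟩ := Finset.exists_superset_card_eq hT₀mem.2
    (by simpa using hk)
  have hTsum : ∑ i ∈ T, v i = topSum v k := by
    refine le_antisymm (le_topSum hcard.le) ?_
    rw [topSum, hT₀]
    exact Finset.sum_le_sum_of_subset_of_nonneg hsub (fun i _ _ => hv i)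
  refine ⟨T, hcard, hTsum, ?_⟩
  intro i hi j hj
  by_contra hlt
  push_neg at hlt
  have hins : i ∉ T.erase j := fun h => hi (Finset.mem_of_mem_erase h)
  have hcard' : (insert i (T.erase j)).card ≤ k := by
    rw [Finset.card_insert_of_notMem hins, Finset.card_erase_of_mem hj, hcard]
    have : 0 < k := hcard ▸ Finset.card_pos.mpr ⟨j, hj⟩
    omega
  have hsum : ∑ x ∈ T, v x < ∑ x ∈ insert i (T.erase j), v x := by
    rw [Finset.sum_insert hins, ← Finset.add_sum_erase _ _ hj]
    exact add_lt_add_left hlt _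
  have := le_topSum (v := v) hcard'
  linarith [hTsum]

/-- If `0 ≤ c ≤ 1` with `∑ c ≤ k` and `v ≥ 0`, then `∑ v c ≤ topSum v k`. -/
lemma sum_mul_le_topSum {v c : Fin n → ℝ} (hv : ∀ i, 0 ≤ v i)
    (hc0 : ∀ i, 0 ≤ c i) (hc1 : ∀ i, c i ≤ 1) {k : ℕ} (hck : ∑ i, c i ≤ k) :
    ∑ i, v i * c i ≤ topSum v k := by
  rcases le_or_gt k n with hk | hk
  · rcases Nat.eq_zero_or_pos k with hk0 | hkpos
    · subst hk0
      have hcz : ∑ i, c i = 0 :=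
        le_antisymm (by simpa using hck) (Finset.sum_nonneg fun i _ => hc0 i)
      have hc := (Finset.sum_eq_zero_iff_of_nonneg (fun i _ => hc0 i)).mp hcz
      have : ∑ i, v i * c i = 0 :=
        Finset.sum_eq_zero fun i _ => by rw [hc i (Finset.mem_univ i), mul_zero]
      rw [this]; exact topSum_nonneg v 0
    · obtain ⟨T, hTcard, hTsum, hexch⟩ := topSum_attained hv hk
      have hTne : T.Nonempty := Finset.card_pos.mp (by omega)
      obtain ⟨j₀, hj₀, hmin⟩ := Finset.exists_min_image T v hTne
      have h1 : ∑ i ∈ T, v i * c i ≤ ∑ i ∈ T, (v i + v j₀ * (c i - 1)) := by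
        apply Finset.sum_le_sum
        intro i hi
        have h := mul_le_mul_of_nonpos_right (hmin i hi) (by linarith [hc1 i] :
          c i - 1 ≤ 0)
        nlinarith
      have h2 : ∑ i ∈ Tᶜ, v i * c i ≤ ∑ i ∈ Tᶜ, v j₀ * c i := by
        apply Finset.sum_le_sum
        intro i hi
        exact mul_le_mul_of_nonneg_right (hexch i (by simpa using hi) j₀ hj₀) (hc0 i)
      have e1 : ∑ i ∈ T, (v i + v j₀ * (c i - 1)) =
          ∑ i ∈ T, v i + v j₀ * (∑ i ∈ T, c i - k) := by
        rw [Finset.sum_add_distrib, ← Finset.mul_sum, Finset.sum_sub_distrib,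
          Finset.sum_const, hTcard, nsmul_eq_mul, mul_one]
      have e2 : ∑ i ∈ Tᶜ, v j₀ * c i = v j₀ * ∑ i ∈ Tᶜ, c i := (Finset.mul_sum _ _ _).symm
      have hsplit : ∑ i, v i * c i = ∑ i ∈ T, v i * c i + ∑ i ∈ Tᶜ, v i * c i :=
        (Finset.sum_add_sum_compl T _).symm
      have hsplitc : ∑ i ∈ T, c i + ∑ i ∈ Tᶜ, c i = ∑ i, c i :=
        Finset.sum_add_sum_compl T _
      have hj₀nn : 0 ≤ v j₀ := hv j₀
      have : ∑ i, v i * c i ≤ ∑ i ∈ T, v i + v j₀ * (∑ i, c i - k) := by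
        rw [hsplit, ← hsplitc]
        rw [e1] at h1
        rw [e2] at h2
        ring_nf
        nlinarith
      have hfinal : v j₀ * (∑ i, c i - k) ≤ 0 :=
        mul_nonpos_of_nonneg_of_nonpos hj₀nn (by linarith)
      linarith [hTsum ▸ (le_refl (∑ i ∈ T, v i))]
  · have h1 : ∑ i, v i * c i ≤ ∑ i, v i := by
      apply Finset.sum_le_sum
      intro i _
      nlinarith [hv i, hc0 i, hc1 i]
    exact h1.trans (le_topSum (by simp; omega))


/-- extension by zero -/
noncomputable def ext0 {n : ℕ} (g : Fin n → ℝ) : ℕ → ℝ :=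
  fun j => if h : j < n then g ⟨j, h⟩ else 0

lemma ext0_coe (g : Fin n → ℝ) (i : Fin n) : ext0 g i = g i := by
  simp [ext0, i.isLt]

lemma card_prefix (m : ℕ) (hm : m ≤ n) :
    (Finset.univ.filter fun j : Fin n => (j : ℕ) < m).card = m := by
  rw [← Finset.card_range m]
  apply Finset.card_bij (fun (a : Fin n) _ => (a : ℕ))
  · intro a ha; simp only [Finset.mem_filter] at ha; simpa using ha.2
  · intro a ha b hb hab; exact Fin.ext hab
  · intro b hb
    simp only [Finset.mem_range] at hb
    refine ⟨⟨b, lt_of_lt_of_le hb hm⟩, by simp [hb], rfl⟩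

lemma image_castLE (hm : m ≤ n) :
    (Finset.univ : Finset (Fin m)).image (Fin.castLE hm) =
      Finset.univ.filter (fun j : Fin n => (j : ℕ) < m) := by
  ext x
  simp only [Finset.mem_image, Finset.mem_filter, Finset.mem_univ, true_and]
  constructor
  · rintro ⟨a, -, rfl⟩; exact a.isLt
  · intro hx; exact ⟨⟨x, hx⟩, rfl⟩

lemma sum_ext_prefix (g : Fin n → ℝ) {m : ℕ} (hm : m ≤ n) :
    ∑ j ∈ Finset.range m, ext0 g j =
      ∑ j ∈ Finset.univ.filter (fun j : Fin n => (j : ℕ) < m), g j := by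
  rw [← image_castLE hm, Finset.sum_image (fun a _ b _ h => Fin.castLE_injective hm h),
    ← Fin.sum_univ_eq_sum_range (ext0 g) m]
  apply Finset.sum_congr rfl
  intro i _
  simp [ext0, Fin.castLE, i.isLt, lt_of_lt_of_le i.isLt hm]

/-- if `ρ` sorts `v` in decreasing order, any set of card `≤ m` sums to at most the
prefix sum of the sorted sequence -/
lemma sum_le_sorted_prefix {v : Fin n → ℝ} (hv : ∀ i, 0 ≤ v i) {ρ : Equiv.Perm (Fin n)}
    (hρ : Antitone (fun j => v (ρ j))) :
    ∀ m : ℕ, ∀ J : Finset (Fin n), J.card ≤ m →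
      ∑ i ∈ J, v i ≤ ∑ j ∈ Finset.range m, ext0 (fun j => v (ρ j)) j := by
  intro m
  induction m with
  | zero => intro J hJ; simp_all [Finset.card_eq_zero.mp (Nat.le_zero.mp hJ)]
  | succ m ih =>
    intro J hJ
    have hext : 0 ≤ ext0 (fun j => v (ρ j)) m := by
      unfold ext0; split <;> simp [hv]
    rcases Nat.lt_or_ge J.card (m + 1) with h | h
    · calc ∑ i ∈ J, v i ≤ ∑ j ∈ Finset.range m, ext0 (fun j => v (ρ j)) j :=
            ih J (by omega)
        _ ≤ _ := by rw [Finset.sum_range_succ]; linarith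
    · have hJc : J.card = m + 1 := le_antisymm hJ h
      have hmn : m < n := by
        have := J.card_le_univ; simp at this; omega
      by_cases hex : ∃ i ∈ J, v i ≤ v (ρ ⟨m, hmn⟩)
      · obtain ⟨i₀, hi₀, hvi₀⟩ := hex
        rw [← Finset.add_sum_erase _ _ hi₀, Finset.sum_range_succ]
        have hm0 : ext0 (fun j => v (ρ j)) m = v (ρ ⟨m, hmn⟩) := by simp [ext0, hmn]
        rw [hm0]
        linarith [ih (J.erase i₀) (by rw [Finset.card_erase_of_mem hi₀, hJc]; omega)]
      · push_neg at hex
        exfalso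
        have hmap : ∀ i ∈ J, ((ρ.symm i : Fin n) : ℕ) < m := by
          intro i hi
          by_contra hge
          push_neg at hge
          have : v (ρ (ρ.symm i)) ≤ v (ρ ⟨m, hmn⟩) := hρ (by
            show (⟨m, hmn⟩ : Fin n) ≤ ρ.symm i
            exact Fin.mk_le_of_le_val hge)
          rw [Equiv.apply_symm_apply] at this
          exact absurd this (not_le.mpr (hex i hi))
        have hinj : Set.InjOn (fun i => ρ.symm i) J := fun a _ b _ hab => by
          simpa using ρ.symm.injective hab
        have hsub : (J.image (fun i => ρ.symm i)) ⊆
            Finset.univ.filter (fun j : Fin n => (j : ℕ) < m) := by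
          intro x hx
          simp only [Finset.mem_image] at hx
          obtain ⟨i, hi, rfl⟩ := hx
          simp [hmap i hi]
        have h1 : (J.image (fun i => ρ.symm i)).card = m + 1 := by
          rw [Finset.card_image_of_injOn hinj, hJc]
        have h2 := Finset.card_le_card hsub
        rw [h1, card_prefix m hmn.le] at h2
        omega

/-- `topSum` equals the prefix sum of the decreasing rearrangement -/
lemma topSum_sorted {v : Fin n → ℝ} (hv : ∀ i, 0 ≤ v i) {ρ : Equiv.Perm (Fin n)}
    (hρ : Antitone (fun j => v (ρ j))) {m : ℕ} (hm : m ≤ n) :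
    topSum v m = ∑ j ∈ Finset.range m, ext0 (fun j => v (ρ j)) j := by
  refine le_antisymm ?_ ?_
  · apply Finset.sup'_le
    intro t ht
    simp only [Finset.mem_filter] at ht
    exact sum_le_sorted_prefix hv hρ m t ht.2
  · rw [sum_ext_prefix _ hm]
    have heq : ∑ j ∈ Finset.univ.filter (fun j : Fin n => (j : ℕ) < m), v (ρ j) =
        ∑ i ∈ (Finset.univ.filter (fun j : Fin n => (j : ℕ) < m)).image ρ, v i :=
      (Finset.sum_image (fun a _ b _ h => ρ.injective h)).symm
    rw [heq]
    apply le_topSum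
    rw [Finset.card_image_of_injective _ ρ.injective, card_prefix m hm]

/-- Abel summation auxiliary: antitone nonneg weights and nonneg prefix sums -/
lemma abel_aux : ∀ (N : ℕ) (a δ : ℕ → ℝ), (∀ i j, i ≤ j → a j ≤ a i) → (∀ j, 0 ≤ a j) →
    (∀ m, m ≤ N → 0 ≤ ∑ j ∈ Finset.range m, δ j) → 0 ≤ ∑ j ∈ Finset.range N, a j * δ j := by
  intro N
  induction N with
  | zero => intro a δ _ _ _; simp
  | succ N ih =>
    intro a δ ha ha0 hδ
    set b : ℕ → ℝ := fun j => a (min j N) - a N with hb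
    have hbanti : ∀ i j, i ≤ j → b j ≤ b i := fun i j hij => by
      simp only [hb]
      have := ha (min i N) (min j N) (by omega)
      linarith
    have hb0 : ∀ j, 0 ≤ b j := fun j => by
      simp only [hb]
      have := ha (min j N) N (by omega)
      linarith
    have ihb := ih b δ hbanti hb0 (fun m hm => hδ m (by omega))
    have hsum : ∑ j ∈ Finset.range (N+1), a j * δ j =
        ∑ j ∈ Finset.range N, b j * δ j + b N * δ N + a N * ∑ j ∈ Finset.range (N+1), δ j := by
      calc ∑ j ∈ Finset.range (N+1), a j * δ j
          = ∑ j ∈ Finset.range (N+1), (b j * δ j + a N * δ j) := by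
            apply Finset.sum_congr rfl
            intro j hj
            simp only [Finset.mem_range] at hj
            have hj' : min j N = j := min_eq_left (by omega)
            simp only [hb, hj']
            ring
        _ = ∑ j ∈ Finset.range (N+1), b j * δ j + a N * ∑ j ∈ Finset.range (N+1), δ j := by
            rw [Finset.sum_add_distrib, Finset.mul_sum]
        _ = _ := by rw [Finset.sum_range_succ]
    rw [hsum]
    have hbN : b N = 0 := by simp [hb]
    have h2 := mul_nonneg (ha0 N) (hδ (N+1) le_rfl)
    rw [hbN]
    linarith

lemma abel_le (N : ℕ) (a u w : ℕ → ℝ) (ha : ∀ i j, i ≤ j → a j ≤ a i) (ha0 : ∀ j, 0 ≤ a j)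
    (h : ∀ m, m ≤ N → ∑ j ∈ Finset.range m, u j ≤ ∑ j ∈ Finset.range m, w j) :
    ∑ j ∈ Finset.range N, a j * u j ≤ ∑ j ∈ Finset.range N, a j * w j := by
  have key := abel_aux N a (fun j => w j - u j) ha ha0 (fun m hm => by
    rw [Finset.sum_sub_distrib]
    linarith [h m hm])
  have heq : ∑ j ∈ Finset.range N, a j * (w j - u j) =
      ∑ j ∈ Finset.range N, a j * w j - ∑ j ∈ Finset.range N, a j * u j := by
    rw [← Finset.sum_sub_distrib]
    apply Finset.sum_congr rfl
    intro j _; ring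
  rw [heq] at key
  linarith

lemma sort_antitone (v : Fin n → ℝ) :
    Antitone (fun j => v (Tuple.sort (fun i => -v i) j)) := by
  have h := Tuple.monotone_sort (fun i => -v i)
  intro i j hij
  have := h hij
  simp only [Function.comp] at this
  linarith

lemma ext0_anti {w : Fin n → ℝ} (hw : Antitone w) (hw0 : ∀ i, 0 ≤ w i) :
    ∀ i j : ℕ, i ≤ j → ext0 w j ≤ ext0 w i := by
  intro i j hij
  unfold ext0
  split
  · rename_i hj
    rw [dif_pos (lt_of_le_of_lt hij hj)]
    exact hw (by exact_mod_cast hij)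
  · split
    · exact hw0 _
    · exact le_refl 0

lemma ext0_nonneg {w : Fin n → ℝ} (hw0 : ∀ i, 0 ≤ w i) : ∀ j : ℕ, 0 ≤ ext0 w j := by
  intro j; unfold ext0; split <;> simp [hw0]

lemma prefix_sum_ext {v : Fin n → ℝ} (η : Equiv.Perm (Fin n)) {m : ℕ} (hm : m ≤ n) :
    ∃ J : Finset (Fin n), J.card = m ∧
      ∑ j ∈ Finset.range m, ext0 (fun j => v (η j)) j = ∑ i ∈ J, v i := by
  refine ⟨(Finset.univ.filter (fun j : Fin n => (j : ℕ) < m)).image η, ?_, ?_⟩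
  · rw [Finset.card_image_of_injective _ η.injective, card_prefix m hm]
  · rw [sum_ext_prefix _ hm, Finset.sum_image (fun a _ b _ h => η.injective h)]

/-- The main scalar inequality. -/
lemma scalar_main {k : ℕ} (hk : k ≤ n) (d e c : Fin n → ℝ)
    (hd0 : ∀ i, 0 ≤ d i) (he0 : ∀ i, 0 ≤ e i) (hc0 : ∀ i, 0 ≤ c i)
    (Hd : ∀ J : Finset (Fin n), ∑ i ∈ J, d i ≤ topSum c J.card)
    (He : ∀ J : Finset (Fin n), ∑ i ∈ J, e i ≤ topSum c (min J.card k)) :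
    ∑ i, d i * e i ≤ topSum (fun i => c i * c i) k := by
  set σ := Tuple.sort (fun i => -d i) with hσdef
  set τ := Tuple.sort (fun i => -e i) with hτdef
  set ρ := Tuple.sort (fun i => -c i) with hρdef
  have hσ : Antitone (fun j => d (σ j)) := sort_antitone d
  have hτ : Antitone (fun j => e (τ j)) := sort_antitone e
  have hρ : Antitone (fun j => c (ρ j)) := sort_antitone c
  set d' : ℕ → ℝ := ext0 (fun j => d (σ j)) with hd'
  set e' : ℕ → ℝ := ext0 (fun j => e (τ j)) with he'
  set c' : ℕ → ℝ := ext0 (fun j => c (ρ j)) with hc'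
  have hd'anti := ext0_anti hσ (fun i => hd0 _)
  have he'anti := ext0_anti hτ (fun i => he0 _)
  have hc'anti := ext0_anti hρ (fun i => hc0 _)
  have hd'0 := ext0_nonneg (w := fun j => d (σ j)) (fun i => hd0 _)
  have he'0 := ext0_nonneg (w := fun j => e (τ j)) (fun i => he0 _)
  have hc'0 := ext0_nonneg (w := fun j => c (ρ j)) (fun i => hc0 _)
  -- Step 1 : rearrangement
  have step1 : ∑ i, d i * e i ≤ ∑ j ∈ Finset.range n, d' j * e' j := by
    have hcomp : ∑ i, d i * e i = ∑ i, d (σ i) * e (σ i) :=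
      (Equiv.sum_comp σ (fun i => d i * e i)).symm
    have hmono : Monovary (fun i => d (σ i)) (fun i => e (τ i)) := by
      intro i j hgij
      rcases le_or_gt i j with h | h
      · exact absurd (hτ h) (not_le.mpr hgij)
      · exact hσ h.le
    have hrearr := hmono.sum_mul_comp_perm_le_sum_mul (σ := σ.trans τ.symm)
    have hre : ∀ i, e (τ ((σ.trans τ.symm) i)) = e (σ i) := by
      intro i; simp [Equiv.trans_apply]
    rw [hcomp]
    calc ∑ i, d (σ i) * e (σ i)
        = ∑ i, d (σ i) * e (τ ((σ.trans τ.symm) i)) := by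
          apply Finset.sum_congr rfl; intro i _; rw [hre]
      _ ≤ ∑ i, d (σ i) * e (τ i) := hrearr
      _ = ∑ j ∈ Finset.range n, d' j * e' j := by
          rw [← Fin.sum_univ_eq_sum_range (fun j => d' j * e' j) n]
          apply Finset.sum_congr rfl
          intro i _
          rw [hd', he', ext0_coe, ext0_coe]
  -- prefix bounds
  have Pd : ∀ m : ℕ, m ≤ n → ∑ j ∈ Finset.range m, d' j ≤ topSum c m := by
    intro m hm
    obtain ⟨J, hJc, hJs⟩ := prefix_sum_ext (v := d) σ hm
    rw [hd', hJs, ← hJc]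
    exact Hd J
  have Pe : ∀ m : ℕ, m ≤ n → ∑ j ∈ Finset.range m, e' j ≤ topSum c (min m k) := by
    intro m hm
    obtain ⟨J, hJc, hJs⟩ := prefix_sum_ext (v := e) τ hm
    rw [he', hJs, ← hJc]
    exact He J
  have ctop : ∀ m : ℕ, m ≤ n → topSum c m = ∑ j ∈ Finset.range m, c' j := by
    intro m hm
    exact topSum_sorted hc0 hρ hm
  -- capped c sequence
  set g' : ℕ → ℝ := fun j => if j < k then c' j else 0 with hg'
  have G1 : ∀ m : ℕ, ∑ j ∈ Finset.range m, g' j = ∑ j ∈ Finset.range (min m k), c' j := by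
    intro m
    rw [hg', ← Finset.sum_filter]
    apply Finset.sum_congr _ (fun j _ => rfl)
    ext j
    simp only [Finset.mem_filter, Finset.mem_range, lt_min_iff]
  -- first Abel
  have step2 : ∑ j ∈ Finset.range n, d' j * e' j ≤ ∑ j ∈ Finset.range n, d' j * g' j := by
    apply abel_le n d' e' g' hd'anti hd'0
    intro m hm
    rw [G1 m]
    calc ∑ j ∈ Finset.range m, e' j ≤ topSum c (min m k) := Pe m hm
      _ = ∑ j ∈ Finset.range (min m k), c' j := ctop _ (le_trans (min_le_left _ _) hm)
  have step2' : ∑ j ∈ Finset.range n, d' j * g' j = ∑ j ∈ Finset.range k, d' j * c' j := by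
    have : ∀ j, d' j * g' j = if j < k then d' j * c' j else 0 := by
      intro j
      by_cases h : j < k <;> simp [hg', h]
    calc ∑ j ∈ Finset.range n, d' j * g' j
        = ∑ j ∈ Finset.range n, (if j < k then d' j * c' j else 0) :=
          Finset.sum_congr rfl (fun j _ => this j)
      _ = ∑ j ∈ Finset.range (min n k), d' j * c' j := by
          rw [← Finset.sum_filter]
          apply Finset.sum_congr _ (fun j _ => rfl)
          ext j
          simp only [Finset.mem_filter, Finset.mem_range, lt_min_iff]
      _ = ∑ j ∈ Finset.range k, d' j * c' j := by rw [min_eq_right hk]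
  -- second Abel
  have step3 : ∑ j ∈ Finset.range k, d' j * c' j ≤ ∑ j ∈ Finset.range k, c' j * c' j := by
    have hcomm : ∑ j ∈ Finset.range k, d' j * c' j = ∑ j ∈ Finset.range k, c' j * d' j :=
      Finset.sum_congr rfl (fun j _ => mul_comm _ _)
    rw [hcomm]
    apply abel_le k c' d' c' hc'anti hc'0
    intro m hm
    calc ∑ j ∈ Finset.range m, d' j ≤ topSum c m := Pd m (le_trans hm hk)
      _ = ∑ j ∈ Finset.range m, c' j := ctop m (le_trans hm hk)
  -- final identification
  have step4 : ∑ j ∈ Finset.range k, c' j * c' j = topSum (fun i => c i * c i) k := by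
    have hρ2 : Antitone (fun j => c (ρ j) * c (ρ j)) := by
      intro i j hij
      exact mul_le_mul (hρ hij) (hρ hij) (hc0 _) (hc0 _)
    rw [topSum_sorted (fun i => mul_nonneg (hc0 i) (hc0 i)) hρ2 hk]
    apply Finset.sum_congr rfl
    intro j _
    rw [hc']
    unfold ext0
    split <;> simp
  linarith [step1, step2, step2' ▸ step2, step3, step4]

/-! ### Matrix lemmas -/
open Matrix ComplexOrder

lemma sandwich_posSemidef' {S T : Matrix (Fin n) (Fin n) ℂ} (hS : S.IsHermitian)
    (hT : T.PosSemidef) : (S * T * S).PosSemidef := by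
  have h := hT.mul_mul_conjTranspose_same S
  rwa [hS.eq] at h

lemma psd_diag_nonneg {M : Matrix (Fin n) (Fin n) ℂ} (hM : M.PosSemidef) (i : Fin n) :
    0 ≤ M i i := by
  exact hM.diag_nonneg

lemma psd_diag_real {M : Matrix (Fin n) (Fin n) ℂ} (hM : M.PosSemidef) (i : Fin n) :
    M i i = (((M i i).re : ℝ) : ℂ) := by
  have h := psd_diag_nonneg hM i
  rw [Complex.le_def] at h
  simp only [Complex.zero_re, Complex.zero_im] at h
  exact Complex.ext rfl (by simp [h.2.symm])

lemma psd_trace_nonneg {M : Matrix (Fin n) (Fin n) ℂ} (hM : M.PosSemidef) :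
    0 ≤ M.trace :=
  Finset.sum_nonneg fun i _ => psd_diag_nonneg hM i

lemma psd_trace_mul_nonneg {A B : Matrix (Fin n) (Fin n) ℂ} (hA : A.PosSemidef)
    (hB : B.PosSemidef) : 0 ≤ (A * B).trace := by
  have h1 : A * B = A * hB.sqrt * hB.sqrt := by
    rw [mul_assoc, hB.sqrt_mul_self]
  have h2 : (A * hB.sqrt * hB.sqrt).trace = (hB.sqrt * A * hB.sqrt).trace :=
    Matrix.trace_mul_cycle A hB.sqrt hB.sqrt
  rw [h1, h2]
  exact psd_trace_nonneg (sandwich_posSemidef' hB.posSemidef_sqrt.isHermitian hA)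

lemma trace_diagonal_mul (v : Fin n → ℂ) (M : Matrix (Fin n) (Fin n) ℂ) :
    (Matrix.diagonal v * M).trace = ∑ i, v i * M i i := by
  simp [Matrix.trace, Matrix.diag, Matrix.diagonal_mul]

lemma trace_mul_diagonal (v : Fin n → ℂ) (M : Matrix (Fin n) (Fin n) ℂ) :
    (M * Matrix.diagonal v).trace = ∑ i, M i i * v i := by
  simp [Matrix.trace, Matrix.diag, Matrix.mul_diagonal]

/-- indicator vector -/
def indC {n : ℕ} (J : Finset (Fin n)) : Fin n → ℂ := fun i => if i ∈ J then 1 else 0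

lemma indC_nonneg (J : Finset (Fin n)) : (0 : Fin n → ℂ) ≤ indC J := by
  intro i
  simp only [indC, Pi.zero_apply]
  split <;> norm_num

lemma one_sub_indC_nonneg (J : Finset (Fin n)) : (0 : Fin n → ℂ) ≤ fun i => 1 - indC J i := by
  intro i
  simp only [indC, Pi.zero_apply]
  split <;> norm_num

/-- spectral projection associated to a Hermitian matrix and an index set -/
noncomputable def projMat {Y : Matrix (Fin n) (Fin n) ℂ} (hY : Y.IsHermitian)
    (J : Finset (Fin n)) : Matrix (Fin n) (Fin n) ℂ :=
  (hY.eigenvectorUnitary : Matrix (Fin n) (Fin n) ℂ) * Matrix.diagonal (indC J) *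
    star (hY.eigenvectorUnitary : Matrix (Fin n) (Fin n) ℂ)

lemma projMat_posSemidef {Y : Matrix (Fin n) (Fin n) ℂ} (hY : Y.IsHermitian)
    (J : Finset (Fin n)) : (projMat hY J).PosSemidef := by
  have hdiag : (Matrix.diagonal (indC J)).PosSemidef :=
    Matrix.PosSemidef.diagonal (indC_nonneg J)
  have h := hdiag.mul_mul_conjTranspose_same
    ((hY.eigenvectorUnitary : Matrix (Fin n) (Fin n) ℂ))
  rwa [← Matrix.star_eq_conjTranspose] at h

lemma one_sub_projMat_posSemidef {Y : Matrix (Fin n) (Fin n) ℂ} (hY : Y.IsHermitian)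
    (J : Finset (Fin n)) : (1 - projMat hY J).PosSemidef := by
  set V := (hY.eigenvectorUnitary : Matrix (Fin n) (Fin n) ℂ) with hV
  have hVV : V * star V = 1 := (Matrix.mem_unitaryGroup_iff).mp hY.eigenvectorUnitary.2
  have key : 1 - projMat hY J = V * Matrix.diagonal (fun i => 1 - indC J i) * star V := by
    have : Matrix.diagonal (fun i => 1 - indC J i) =
        1 - Matrix.diagonal (indC J) := by
      rw [← Matrix.diagonal_one, Matrix.diagonal_sub]
    rw [this, Matrix.mul_sub, Matrix.sub_mul, mul_one, hVV, projMat]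
  rw [key]
  have hdiag : (Matrix.diagonal (fun i => 1 - indC J i)).PosSemidef :=
    Matrix.PosSemidef.diagonal (one_sub_indC_nonneg J)
  have h := hdiag.mul_mul_conjTranspose_same V
  rwa [← Matrix.star_eq_conjTranspose] at h

lemma projMat_trace {Y : Matrix (Fin n) (Fin n) ℂ} (hY : Y.IsHermitian)
    (J : Finset (Fin n)) : (projMat hY J).trace = (J.card : ℂ) := by
  set V := (hY.eigenvectorUnitary : Matrix (Fin n) (Fin n) ℂ) with hV
  have hsVV : star V * V = 1 := Matrix.UnitaryGroup.star_mul_self hY.eigenvectorUnitary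
  rw [projMat, Matrix.trace_mul_cycle, ← hV, hsVV, one_mul, Matrix.trace_diagonal]
  simp [indC]

lemma trace_mul_projMat {Y : Matrix (Fin n) (Fin n) ℂ} (hY : Y.IsHermitian)
    (J : Finset (Fin n)) (N : Matrix (Fin n) (Fin n) ℂ) :
    (N * projMat hY J).trace = ∑ i ∈ J,
      ((star (hY.eigenvectorUnitary : Matrix (Fin n) (Fin n) ℂ)) * N *
        (hY.eigenvectorUnitary : Matrix (Fin n) (Fin n) ℂ)) i i := by
  set V := (hY.eigenvectorUnitary : Matrix (Fin n) (Fin n) ℂ) with hV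
  have h1 : N * projMat hY J = (N * V) * Matrix.diagonal (indC J) * star V := by
    rw [projMat, ← hV]
    noncomm_ring
  rw [h1, Matrix.trace_mul_cycle, trace_mul_diagonal]
  have : ∀ i, (star V * (N * V)) i i * indC J i =
      if i ∈ J then (star V * N * V) i i else 0 := by
    intro i
    rw [indC, ← mul_assoc]
    split <;> simp
  rw [Finset.sum_congr rfl (fun i _ => this i)]
  simp [Finset.sum_ite_mem]

lemma trace_eigen {Y : Matrix (Fin n) (Fin n) ℂ} (hY : Y.IsHermitian)
    (B : Matrix (Fin n) (Fin n) ℂ) :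
    (Y * B).trace = ∑ i, (hY.eigenvalues i : ℂ) *
      ((star (hY.eigenvectorUnitary : Matrix (Fin n) (Fin n) ℂ)) * B *
        (hY.eigenvectorUnitary : Matrix (Fin n) (Fin n) ℂ)) i i := by
  set V := (hY.eigenvectorUnitary : Matrix (Fin n) (Fin n) ℂ) with hV
  conv_lhs => rw [hY.spectral_theorem, Unitary.conjStarAlgAut_apply]
  rw [show (V * Matrix.diagonal (RCLike.ofReal ∘ hY.eigenvalues) * star V) * B
      = V * Matrix.diagonal (RCLike.ofReal ∘ hY.eigenvalues) * (star V * B) by noncomm_ring,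
    Matrix.trace_mul_cycle, trace_mul_diagonal]
  apply Finset.sum_congr rfl
  intro i _
  rw [mul_comm]
  rfl

lemma trace_unitary_conj {V : Matrix (Fin n) (Fin n) ℂ} (hVV : V * star V = 1)
    (M : Matrix (Fin n) (Fin n) ℂ) : (star V * M * V).trace = M.trace := by
  rw [Matrix.trace_mul_cycle, hVV, one_mul]

/-- Ky Fan-type kernel bound: if `0 ≤ W ≤ 1` and `tr W ≤ k`, then
`Re tr (A W) ≤ topSum (λ(A)) k` for `A` positive semidefinite. -/
lemma kyfan {A W : Matrix (Fin n) (Fin n) ℂ} (hA : A.PosSemidef) (hW : W.PosSemidef)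
    (hW1 : (1 - W).PosSemidef) {k : ℕ} (htr : W.trace.re ≤ (k : ℝ)) :
    ((A * W).trace).re ≤ topSum hA.1.eigenvalues k := by
  set V := (hA.1.eigenvectorUnitary : Matrix (Fin n) (Fin n) ℂ) with hV
  have hVV : V * star V = 1 := (Matrix.mem_unitaryGroup_iff).mp hA.1.eigenvectorUnitary.2
  have hsVV : star V * V = 1 := Matrix.UnitaryGroup.star_mul_self hA.1.eigenvectorUnitary
  set M := star V * W * V with hM
  have hMpsd : M.PosSemidef := by
    have h := hW.mul_mul_conjTranspose_same (star V)
    rwa [← Matrix.star_eq_conjTranspose, star_star] at h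
  have hM1psd : (1 - M).PosSemidef := by
    have key : 1 - M = star V * (1 - W) * V := by
      rw [Matrix.mul_sub, Matrix.sub_mul, mul_one, hsVV, hM]
    rw [key]
    have h := hW1.mul_mul_conjTranspose_same (star V)
    rwa [← Matrix.star_eq_conjTranspose, star_star] at h
  set c : Fin n → ℝ := fun i => (M i i).re with hc
  have hMc : ∀ i, M i i = ((c i : ℝ) : ℂ) := fun i => psd_diag_real hMpsd i
  have hc0 : ∀ i, 0 ≤ c i := by
    intro i
    have h := psd_diag_nonneg hMpsd i
    rw [Complex.le_def] at h
    simpa using h.1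
  have hc1 : ∀ i, c i ≤ 1 := by
    intro i
    have h := psd_diag_nonneg hM1psd i
    rw [Complex.le_def] at h
    have h1 : (0:ℝ) ≤ ((1 - M) i i).re := by simpa using h.1
    have h2 : ((1 - M) i i).re = 1 - c i := by
      simp [Matrix.sub_apply, Matrix.one_apply, hc]
    linarith [h2 ▸ h1]
  have hsum : ∑ i, c i ≤ (k : ℝ) := by
    have htrM : M.trace = W.trace := trace_unitary_conj hVV W
    have : ∑ i, c i = M.trace.re := by
      rw [Matrix.trace, Complex.re_sum]
      rfl
    rw [this, htrM]
    exact htr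
  have hform : (A * W).trace = ((∑ i, hA.1.eigenvalues i * c i : ℝ) : ℂ) := by
    rw [trace_eigen hA.1 W]
    push_cast
    apply Finset.sum_congr rfl
    intro i _
    rw [← hV, ← hM, hMc i]
  rw [hform]
  rw [Complex.ofReal_re]
  exact sum_mul_le_topSum (fun i => hA.eigenvalues_nonneg i) hc0 hc1 hsum

/-- From equality of value multisets, get a permutation matching values. -/
lemma exists_perm_of_map_eq {α β : Type*} [Fintype α] [DecidableEq α] {f g : α → β}
    (h : Multiset.map f Finset.univ.val = Multiset.map g Finset.univ.val) :
    ∃ σ : Equiv.Perm α, ∀ a, f (σ a) = g a := by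
  classical
  have hcard : ∀ b : β, Fintype.card {x // g x = b} = Fintype.card {x // f x = b} := by
    intro b
    have hcount := congrArg (Multiset.count b) h
    rw [Multiset.count_map, Multiset.count_map] at hcount
    have hf : Fintype.card {x // f x = b} =
        Multiset.card (Multiset.filter (fun a => b = f a) Finset.univ.val) := by
      rw [Fintype.card_subtype]
      rw [Finset.card, Finset.filter_val]
      congr 1
      apply Multiset.filter_congr
      intro x _
      exact eq_comm
    have hg : Fintype.card {x // g x = b} =
        Multiset.card (Multiset.filter (fun a => b = g a) Finset.univ.val) := by
      rw [Fintype.card_subtype]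
      rw [Finset.card, Finset.filter_val]
      congr 1
      apply Multiset.filter_congr
      intro x _
      exact eq_comm
    rw [hf, hg, hcount]
  set e : ∀ b : β, {x // g x = b} ≃ {x // f x = b} :=
    fun b => Fintype.equivOfCardEq (hcard b) with he
  refine ⟨((Equiv.sigmaFiberEquiv g).symm.trans
    ((Equiv.sigmaCongrRight e).trans (Equiv.sigmaFiberEquiv f))), ?_⟩
  intro a
  exact (e (g a) ⟨a, rfl⟩).2

lemma det_conj_diag {V : Matrix (Fin n) (Fin n) ℂ} (hVV : V * star V = 1)
    (v : Fin n → ℂ) (z : ℂ) :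
    (z • (1 : Matrix (Fin n) (Fin n) ℂ) - V * Matrix.diagonal v * star V).det =
      ∏ i, (z - v i) := by
  have hinv : V⁻¹ = star V := Matrix.inv_eq_right_inv hVV
  have hu : IsUnit V := (Matrix.isUnit_iff_isUnit_det V).mpr (Matrix.isUnit_det_of_right_inverse hVV)
  have key : V * (Matrix.diagonal (fun i => z - v i)) * star V =
      z • (1 : Matrix (Fin n) (Fin n) ℂ) - V * Matrix.diagonal v * star V := by
    have h2 : Matrix.diagonal (fun i => z - v i) =
        z • (1 : Matrix (Fin n) (Fin n) ℂ) - Matrix.diagonal v := by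
      rw [Matrix.smul_one_eq_diagonal, Matrix.diagonal_sub]
    rw [h2, Matrix.mul_sub, Matrix.sub_mul, Matrix.mul_smul, mul_one, Matrix.smul_mul, hVV]
  rw [← key, ← hinv, Matrix.det_conj hu, Matrix.det_diagonal]

lemma eig_sq_multiset {A : Matrix (Fin n) (Fin n) ℂ} (hA : A.PosDef)
    (h2 : (A ^ 2).IsHermitian) :
    Multiset.map h2.eigenvalues Finset.univ.val =
      Multiset.map (fun i => hA.1.eigenvalues i * hA.1.eigenvalues i) Finset.univ.val := by
  classical
  set V := (hA.1.eigenvectorUnitary : Matrix (Fin n) (Fin n) ℂ) with hV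
  have hVV : V * star V = 1 := (Matrix.mem_unitaryGroup_iff).mp hA.1.eigenvectorUnitary.2
  have hsVV : star V * V = 1 := Matrix.UnitaryGroup.star_mul_self hA.1.eigenvectorUnitary
  set W := (h2.eigenvectorUnitary : Matrix (Fin n) (Fin n) ℂ) with hW
  have hWW : W * star W = 1 := (Matrix.mem_unitaryGroup_iff).mp h2.eigenvectorUnitary.2
  set c : Fin n → ℝ := hA.1.eigenvalues with hc
  set ν : Fin n → ℝ := h2.eigenvalues with hν
  have hA2 : A ^ 2 = V * Matrix.diagonal (fun i => (c i : ℂ) * (c i : ℂ)) * star V := by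
    rw [pow_two]
    conv_lhs => rw [hA.1.spectral_theorem, Unitary.conjStarAlgAut_apply]
    rw [← hV, ← Matrix.diagonal_mul_diagonal]
    have : (Matrix.diagonal (RCLike.ofReal ∘ hA.1.eigenvalues) :
        Matrix (Fin n) (Fin n) ℂ) = Matrix.diagonal (fun i => (c i : ℂ)) := rfl
    rw [this]
    calc V * Matrix.diagonal (fun i => (c i : ℂ)) * star V *
          (V * Matrix.diagonal (fun i => (c i : ℂ)) * star V)
        = V * Matrix.diagonal (fun i => (c i : ℂ)) * (star V * V) *
            Matrix.diagonal (fun i => (c i : ℂ)) * star V := by noncomm_ring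
      _ = V * (Matrix.diagonal (fun i => (c i : ℂ)) *
            Matrix.diagonal (fun i => (c i : ℂ))) * star V := by
          rw [hsVV, mul_one]
          noncomm_ring
  have hA2' : A ^ 2 = W * Matrix.diagonal (fun i => (ν i : ℂ)) * star W := by
    conv_lhs => rw [h2.spectral_theorem]
    rfl
  have hdet : ∀ z : ℂ, ∏ i, (z - (ν i : ℂ)) = ∏ i, (z - (c i : ℂ) * (c i : ℂ)) := by
    intro z
    rw [← det_conj_diag hWW (fun i => (ν i : ℂ)) z, ← hA2',
      ← det_conj_diag hVV (fun i => (c i : ℂ) * (c i : ℂ)) z, ← hA2]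
  -- polynomial identity
  set mν : Multiset ℂ := Multiset.map (fun i => (ν i : ℂ)) Finset.univ.val with hmν
  set mc : Multiset ℂ := Multiset.map (fun i => (c i : ℂ) * (c i : ℂ)) Finset.univ.val with hmc
  have heval : ∀ (m : Multiset ℂ) (z : ℂ),
      ((Multiset.map (fun a => Polynomial.X - Polynomial.C a) m).prod).eval z =
        (Multiset.map (fun a => z - a) m).prod := by
    intro m z
    rw [Polynomial.eval_multiset_prod, Multiset.map_map]
    congr 1
    apply Multiset.map_congr rfl
    intro a _
    simp
  have hpq : (Multiset.map (fun a => Polynomial.X - Polynomial.C a) mν).prod =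
      (Multiset.map (fun a => Polynomial.X - Polynomial.C a) mc).prod := by
    apply Polynomial.funext
    intro z
    rw [heval, heval, hmν, hmc, Multiset.map_map, Multiset.map_map]
    rw [← Finset.prod_eq_multiset_prod, ← Finset.prod_eq_multiset_prod]
    exact hdet z
  have hroots := congrArg Polynomial.roots hpq
  rw [Polynomial.roots_multiset_prod_X_sub_C, Polynomial.roots_multiset_prod_X_sub_C] at hroots
  -- descend to ℝ
  apply Multiset.map_injective Complex.ofReal_injective
  rw [Multiset.map_map, Multiset.map_map]
  have e1 : (Complex.ofReal ∘ fun i => c i * c i) = fun i => (c i : ℂ) * (c i : ℂ) := by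
    funext i; simp
  have e2 : (Complex.ofReal ∘ ν) = fun i => ((ν i : ℝ) : ℂ) := by
    funext i; simp
  rw [e1, e2]
  exact hroots


/-- the quadratic lifting lemma for weak majorization:
`λ(D) ≺_w λ(C)` implies `λ(C^{1/2} D C^{1/2}) ≺_w λ(C²)`. -/
theorem quadratic_lifting {n : ℕ} (C D : Matrix (Fin n) (Fin n) ℂ)
    (hC : C.PosDef) (hD : D.PosDef)
    (hmaj : WeakMaj hD.isHermitian.eigenvalues hC.isHermitian.eigenvalues)
    (h1 : (hC.posSemidef.sqrt * D * hC.posSemidef.sqrt).IsHermitian)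
    (h2 : (C ^ 2).IsHermitian) :
    WeakMaj h1.eigenvalues h2.eigenvalues := by
  classical
  intro s
  set R := hC.posSemidef.sqrt with hRdef
  have hR : R.IsHermitian := hC.posSemidef.posSemidef_sqrt.isHermitian
  have hRR : R * R = C := hC.posSemidef.sqrt_mul_self
  set X := R * D * R with hXdef
  set μ : Fin n → ℝ := h1.eigenvalues with hμ
  set ν : Fin n → ℝ := h2.eigenvalues with hν
  set c : Fin n → ℝ := hC.isHermitian.eigenvalues with hc
  set d : Fin n → ℝ := hD.isHermitian.eigenvalues with hd
  set k := s.card with hk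
  have hkn : k ≤ n := by
    have := Finset.card_le_univ s
    simpa using this
  have hc0 : ∀ i, 0 ≤ c i := fun i => (hC.eigenvalues_pos i).le
  have hd0 : ∀ i, 0 ≤ d i := fun i => hD.posSemidef.eigenvalues_nonneg i
  -- the spectral projection of X onto s
  set P := projMat h1 s with hP
  have hPpsd := projMat_posSemidef h1 s
  have h1Ppsd := one_sub_projMat_posSemidef h1 s
  -- trace of X * P is the partial eigenvalue sum
  have hXP : (X * P).trace = ((∑ i ∈ s, μ i : ℝ) : ℂ) := by
    have hdg := h1.conjStarAlgAut_star_eigenvectorUnitary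
    rw [Unitary.conjStarAlgAut_star_apply] at hdg
    rw [hP, trace_mul_projMat h1 s X, hdg]
    push_cast
    apply Finset.sum_congr rfl
    intro i _
    simp [Matrix.diagonal_apply_eq]
    rfl
  -- move to D side
  set Q := R * P * R with hQ
  have hQpsd : Q.PosSemidef := sandwich_posSemidef' hR hPpsd
  have hXPDQ : (X * P).trace = (D * Q).trace := by
    have e1 : X * P = R * (D * (R * P)) := by rw [hXdef]; noncomm_ring
    have e2 : D * (R * P) * R = D * Q := by rw [hQ]; noncomm_ring
    rw [e1, Matrix.trace_mul_comm R (D * (R * P)), e2]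
  have hCQpsd : (C - Q).PosSemidef := by
    have e : R * (1 - P) * R = C - Q := by
      have : R * (1 - P) * R = R * R - R * P * R := by noncomm_ring
      rw [this, hRR, hQ]
    rw [← e]
    exact sandwich_posSemidef' hR h1Ppsd
  -- the diagonal entries of Q in the eigenbasis of D
  set V₂ := (hD.isHermitian.eigenvectorUnitary : Matrix (Fin n) (Fin n) ℂ) with hV₂
  set M₂ := star V₂ * Q * V₂ with hM₂
  have hM₂psd : M₂.PosSemidef := by
    have h := hQpsd.mul_mul_conjTranspose_same (star V₂)
    rwa [← Matrix.star_eq_conjTranspose, star_star] at h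
  set e : Fin n → ℝ := fun i => (M₂ i i).re with he
  have he0 : ∀ i, 0 ≤ e i := by
    intro i
    have h := psd_diag_nonneg hM₂psd i
    rw [Complex.le_def] at h
    simpa using h.1
  have hM₂c : ∀ i, M₂ i i = ((e i : ℝ) : ℂ) := fun i => psd_diag_real hM₂psd i
  -- the key identity : ∑_{i∈s} μ i = ∑ i, d i * e i
  have hDQ : (D * Q).trace = ((∑ i, d i * e i : ℝ) : ℂ) := by
    rw [trace_eigen hD.isHermitian Q]
    push_cast
    apply Finset.sum_congr rfl
    intro i _
    rw [← hV₂, ← hM₂, hM₂c i]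
  have hkey : ∑ i ∈ s, μ i = ∑ i, d i * e i := by
    have := hXP.symm.trans (hXPDQ.trans hDQ)
    exact_mod_cast this
  -- prefix bounds for e
  have He : ∀ J : Finset (Fin n), ∑ i ∈ J, e i ≤ topSum c (min J.card k) := by
    intro J
    set RJ := projMat hD.isHermitian J with hRJ
    have hRJpsd := projMat_posSemidef hD.isHermitian J
    have h1RJpsd := one_sub_projMat_posSemidef hD.isHermitian J
    have he_eq : (Q * RJ).trace = ((∑ i ∈ J, e i : ℝ) : ℂ) := by
      rw [hRJ, trace_mul_projMat hD.isHermitian J Q]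
      push_cast
      apply Finset.sum_congr rfl
      intro i _
      rw [← hV₂, ← hM₂, hM₂c i]
    have hre : (Q * RJ).trace.re = ∑ i ∈ J, e i := by rw [he_eq, Complex.ofReal_re]
    have hRJtr : RJ.trace.re = (J.card : ℝ) := by
      rw [hRJ, projMat_trace]
      simp
    -- bound 1 : against C * RJ
    have bound1 : (Q * RJ).trace.re ≤ topSum c J.card := by
      have hsub : 0 ≤ ((C - Q) * RJ).trace := psd_trace_mul_nonneg hCQpsd hRJpsd
      have hdiff : ((C - Q) * RJ).trace = (C * RJ).trace - (Q * RJ).trace := by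
        rw [Matrix.sub_mul, Matrix.trace_sub]
      rw [hdiff, Complex.le_def] at hsub
      have h1' : 0 ≤ (C * RJ).trace.re - (Q * RJ).trace.re := by simpa using hsub.1
      have h2' := kyfan hC.posSemidef hRJpsd h1RJpsd (k := J.card) (le_of_eq hRJtr)
      have hcc : topSum hC.posSemidef.1.eigenvalues J.card = topSum c J.card := rfl
      rw [hcc] at h2'
      linarith
    -- bound 2 : against C * P
    have bound2 : (Q * RJ).trace.re ≤ topSum c k := by
      have hsub : 0 ≤ (Q * (1 - RJ)).trace := psd_trace_mul_nonneg hQpsd h1RJpsd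
      have hdiff : (Q * (1 - RJ)).trace = Q.trace - (Q * RJ).trace := by
        rw [Matrix.mul_sub, Matrix.trace_sub, mul_one]
      rw [hdiff, Complex.le_def] at hsub
      have h1' : 0 ≤ Q.trace.re - (Q * RJ).trace.re := by simpa using hsub.1
      have hQtr : Q.trace = (C * P).trace := by
        have e1 : Q = R * (P * R) := by rw [hQ]; noncomm_ring
        have e2 : P * R * R = P * C := by rw [← hRR]; noncomm_ring
        rw [e1, Matrix.trace_mul_comm R (P * R), e2, Matrix.trace_mul_comm P C]
      have hPtr : P.trace.re = (k : ℝ) := by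
        rw [hP, projMat_trace]
        simp [hk]
      have h2' := kyfan hC.posSemidef hPpsd h1Ppsd (k := k) (le_of_eq hPtr)
      have hcc : topSum hC.posSemidef.1.eigenvalues k = topSum c k := rfl
      rw [hcc] at h2'
      rw [hQtr] at h1'
      linarith
    rw [← hre]
    rcases le_total J.card k with h | h
    · rw [min_eq_left h]; exact bound1
    · rw [min_eq_right h]; exact bound2
  -- prefix bounds for d
  have Hd : ∀ J : Finset (Fin n), ∑ i ∈ J, d i ≤ topSum c J.card := by
    intro J
    obtain ⟨t, htc, hts⟩ := hmaj J
    exact hts.trans (le_topSum (le_of_eq htc))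
  -- the scalar inequality
  have hmain : ∑ i, d i * e i ≤ topSum (fun i => c i * c i) k :=
    scalar_main hkn d e c hd0 he0 hc0 Hd He
  -- identify topSum (c²) with eigenvalues of C²
  obtain ⟨π, hπ⟩ := exists_perm_of_map_eq (f := ν) (g := fun i => c i * c i)
    (eig_sq_multiset hC h2)
  obtain ⟨T, hTc, hTs, -⟩ := topSum_attained (v := fun i => c i * c i)
    (fun i => mul_nonneg (hc0 i) (hc0 i)) hkn
  refine ⟨T.image π, ?_, ?_⟩
  · rw [Finset.card_image_of_injective _ π.injective, hTc]
  · have himg : ∑ i ∈ T.image π, ν i = ∑ i ∈ T, ν (π i) :=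
      Finset.sum_image (fun a _ b _ h => π.injective h)
    rw [himg]
    have : ∑ i ∈ T, ν (π i) = ∑ i ∈ T, c i * c i :=
      Finset.sum_congr rfl (fun i _ => hπ i)
    rw [this, hTs]
    calc ∑ i ∈ s, μ i = ∑ i, d i * e i := hkey
      _ ≤ topSum (fun i => c i * c i) k := hmain


end Heron
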